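/- Let X, Y be compact Hausdorff spaces and f : X → Y continuous. If f is nowhere tight, then f is not weakly c-tight; that is, there is a 2^ω-loose function for f, where 2^ω is the Cantor space. -/

import Mathlib

open Set Topology

universe u

section Defs

variable {X Y K Z : Type*}

/-- A subset `S` of a topological space is *scattered* iff every nonempty subset `T ⊆ S`
has a point which is isolated in the subspace topology of `T`. -/
def IsScatteredSet [TopologicalSpace X] (S : Set X) : Prop :=
  ∀ T ⊆ S, T.Nonempty → ∃ x ∈ T, ∃ U : Set X, IsOpen U ∧ U ∩ T = {x}

/-- A *loose family* for `f : X → Y` : a pairwise disjoint family `Ps` of closed subsets of `X`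
such that for some non-scattered `Q ⊆ Y`, `f '' P = Q` for all `P ∈ Ps`. -/
def LooseFamily [TopologicalSpace X] [TopologicalSpace Y] (f : X → Y)
    (Ps : Set (Set X)) : Prop :=
  Ps.Pairwise Disjoint ∧ (∀ P ∈ Ps, IsClosed P) ∧
    ∃ Q : Set Y, ¬ IsScatteredSet Q ∧ ∀ P ∈ Ps, f '' P = Q

/-- `f` is `κ`-*tight* iff there is no loose family for `f` of cardinality `κ`. -/
def IsTightCard [TopologicalSpace X] [TopologicalSpace Y] (κ : Cardinal) (f : X → Y) : Prop :=
  ¬ ∃ Ps : Set (Set X), LooseFamily f Ps ∧ Cardinal.mk Ps = κ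

/-- `f` is *tight* iff it is `2`-tight. -/
def IsTight [TopologicalSpace X] [TopologicalSpace Y] (f : X → Y) : Prop :=
  IsTightCard 2 f

/-- A `K`-*loose function* for `f : X → Y` : a continuous `φ : D → K` with `D` closed in `X`,
such that for some non-scattered `Q ⊆ Y`, `φ(f⁻¹{y} ∩ D) = K` for all `y ∈ Q`. -/
def LooseFunction [TopologicalSpace X] [TopologicalSpace Y] [TopologicalSpace K]
    (f : X → Y) (D : Set X) (φ : X → K) : Prop :=
  IsClosed D ∧ ContinuousOn φ D ∧
    ∃ Q : Set Y, ¬ IsScatteredSet Q ∧ ∀ y ∈ Q, φ '' (f ⁻¹' {y} ∩ D) = Set.univ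

/-- `f` is *weakly c-tight* iff there is no `K`-loose function for `f`
with `K` the Cantor space `2^ω`. -/
def WeaklyCTight [TopologicalSpace X] [TopologicalSpace Y] (f : X → Y) : Prop :=
  ¬ ∃ (D : Set X) (φ : X → (ℕ → Bool)), LooseFunction f D φ

/-- `f` is *finer* than `g` iff `f x₁ = f x₂` implies `g x₁ = g x₂`. -/
def Finer (f : X → Y) (g : X → Z) : Prop :=
  ∀ x₁ x₂ : X, f x₁ = f x₂ → g x₁ = g x₂

end Defs

/-- `X` is `κ`-*dissipated* iff every continuous map from `X` to a compact metrizable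
space is refined by a `κ`-tight continuous map from `X` to a compact metrizable space. -/
def IsDissipatedCard (κ : Cardinal.{u}) (X : Type u) [TopologicalSpace X] : Prop :=
  ∀ (Z : Type u) [TopologicalSpace Z] [CompactSpace Z] [TopologicalSpace.MetrizableSpace Z],
    ∀ g : X → Z, Continuous g →
      ∃ (Y : Type u) (tY : TopologicalSpace Y),
        @CompactSpace Y tY ∧ @TopologicalSpace.MetrizableSpace Y tY ∧
        ∃ f : X → Y, @Continuous X Y _ tY f ∧ @IsTightCard X Y _ tY κ f ∧ Finer f g

/-- `X` is *weakly c-dissipated* iff every continuous map from `X` to a compact metrizable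
space is refined by a weakly c-tight continuous map from `X` to a compact metrizable space. -/
def IsWeaklyCDissipated (X : Type u) [TopologicalSpace X] : Prop :=
  ∀ (Z : Type u) [TopologicalSpace Z] [CompactSpace Z] [TopologicalSpace.MetrizableSpace Z],
    ∀ g : X → Z, Continuous g →
      ∃ (Y : Type u) (tY : TopologicalSpace Y),
        @CompactSpace Y tY ∧ @TopologicalSpace.MetrizableSpace Y tY ∧
        ∃ f : X → Y, @Continuous X Y _ tY f ∧ @WeaklyCTight X Y _ tY f ∧ Finer f g

/-- A loose family for the restriction of `f` to a subset `P ⊆ X` : a pairwise disjoint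
family of closed subsets of `X` contained in `P` with a common non-scattered image. -/
def LooseFamilyOn {X Y : Type*} [TopologicalSpace X] [TopologicalSpace Y]
    (f : X → Y) (P : Set X) (Ps : Set (Set X)) : Prop :=
  Ps.Pairwise Disjoint ∧ (∀ A ∈ Ps, IsClosed A ∧ A ⊆ P) ∧
    ∃ Q : Set Y, ¬ IsScatteredSet Q ∧ ∀ A ∈ Ps, f '' A = Q

/-- `f` is *nowhere tight* iff `f(X)` is not scattered and there is no closed `P ⊆ X`
such that `f ↾ P : P → f(P)` is tight and `f(P)` is not scattered. -/
def NowhereTight {X Y : Type*} [TopologicalSpace X] [TopologicalSpace Y]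
    (f : X → Y) : Prop :=
  ¬ IsScatteredSet (Set.range f) ∧
    ¬ ∃ P : Set X, IsClosed P ∧
        (¬ ∃ Ps : Set (Set X), LooseFamilyOn f P Ps ∧ Cardinal.mk Ps = 2) ∧
        ¬ IsScatteredSet (f '' P)


section AuxStmt7

section Aux
variable {X Y : Type*} [TopologicalSpace X] [TopologicalSpace Y]

lemma not_scattered_iff {S : Set X} :
    ¬ IsScatteredSet S ↔ ∃ T, T ⊆ S ∧ T.Nonempty ∧
      ∀ x ∈ T, ∀ U : Set X, IsOpen U → U ∩ T ≠ {x} := by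
  unfold IsScatteredSet
  push_neg
  constructor
  · rintro ⟨T, hTS, hTne, h⟩; exact ⟨T, hTS, hTne, h⟩
  · rintro ⟨T, hTS, hTne, h⟩; exact ⟨T, hTS, hTne, h⟩

lemma IsScatteredSet.mono {S S' : Set X} (h : IsScatteredSet S') (hsub : S ⊆ S') :
    IsScatteredSet S := fun T hT => h T (hT.trans hsub)

lemma nonempty_of_not_scattered {S : Set X} (h : ¬ IsScatteredSet S) : S.Nonempty := by
  rcases not_scattered_iff.1 h with ⟨T, hTS, hTne, -⟩
  exact hTne.mono hTS

/-- split a closed non-scattered set into two disjoint closed non-scattered pieces -/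
lemma ysplit [T2Space Y] [CompactSpace Y] {K : Set Y} (hKc : IsClosed K)
    (hns : ¬ IsScatteredSet K) :
    ∃ K₀ K₁ : Set Y, IsClosed K₀ ∧ IsClosed K₁ ∧ K₀ ⊆ K ∧ K₁ ⊆ K ∧
      Disjoint K₀ K₁ ∧ ¬ IsScatteredSet K₀ ∧ ¬ IsScatteredSet K₁ := by
  rcases not_scattered_iff.1 hns with ⟨T, hTS, hTne, hcr⟩
  obtain ⟨x₀, hx₀⟩ := hTne
  -- T has a second point
  have h2 : ∃ x₁ ∈ T, x₁ ≠ x₀ := by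
    by_contra hc
    push_neg at hc
    exact hcr x₀ hx₀ univ isOpen_univ (by
      apply subset_antisymm
      · intro z hz; rcases hz with ⟨-, hz⟩
        rcases eq_or_ne z x₀ with rfl | hne
        · rfl
        · exact absurd (hc z hz) hne
      · intro z hz; rcases hz with rfl; exact ⟨trivial, hx₀⟩)
  obtain ⟨x₁, hx₁, hne⟩ := h2
  -- separate with disjoint closures
  obtain ⟨u, v, hu, hv, hx₀u, hx₁v, huv⟩ := t2_separation hne.symm
  obtain ⟨s, hs_mem, hs_closed, hs_sub⟩ := exists_mem_nhds_isClosed_subset (hu.mem_nhds hx₀u)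
  obtain ⟨t, ht_mem, ht_closed, ht_sub⟩ := exists_mem_nhds_isClosed_subset (hv.mem_nhds hx₁v)
  set U₀ := interior s
  set U₁ := interior t
  have hclU₀ : closure U₀ ⊆ u := (closure_minimal interior_subset hs_closed).trans hs_sub
  have hclU₁ : closure U₁ ⊆ v := (closure_minimal interior_subset ht_closed).trans ht_sub
  have hx₀U : x₀ ∈ U₀ := mem_interior_iff_mem_nhds.2 hs_mem
  have hx₁U : x₁ ∈ U₁ := mem_interior_iff_mem_nhds.2 ht_mem
  refine ⟨closure (T ∩ U₀), closure (T ∩ U₁), isClosed_closure, isClosed_closure,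
    ?_, ?_, ?_, ?_, ?_⟩
  · exact hKc.closure_subset_iff.2 ((inter_subset_left).trans hTS)
  · exact hKc.closure_subset_iff.2 ((inter_subset_left).trans hTS)
  · refine Set.disjoint_of_subset ?_ ?_ huv
    · exact (closure_mono inter_subset_right).trans hclU₀
    · exact (closure_mono inter_subset_right).trans hclU₁
  · rw [not_scattered_iff]
    refine ⟨T ∩ U₀, subset_closure, ⟨x₀, hx₀, hx₀U⟩, ?_⟩
    intro x hx U hU hUeq
    refine hcr x hx.1 (U ∩ U₀) (hU.inter isOpen_interior) ?_
    rw [← hUeq]; ext z; constructor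
    · rintro ⟨⟨hzU, hzU0⟩, hzT⟩; exact ⟨hzU, hzT, hzU0⟩
    · rintro ⟨hzU, hzT, hzU0⟩; exact ⟨⟨hzU, hzU0⟩, hzT⟩
  · rw [not_scattered_iff]
    refine ⟨T ∩ U₁, subset_closure, ⟨x₁, hx₁, hx₁U⟩, ?_⟩
    intro x hx U hU hUeq
    refine hcr x hx.1 (U ∩ U₁) (hU.inter isOpen_interior) ?_
    rw [← hUeq]; ext z; constructor
    · rintro ⟨⟨hzU, hzU0⟩, hzT⟩; exact ⟨hzU, hzT, hzU0⟩
    · rintro ⟨hzU, hzT, hzU0⟩; exact ⟨⟨hzU, hzU0⟩, hzT⟩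

end Aux

section Idx
/-- agreement of two branches up to level `n` -/
def Agr (n : ℕ) (g g' : ℕ → Bool) : Prop := ∀ i, i < n → g i = g' i

def extn (n : ℕ) (v : Fin n → Bool) : ℕ → Bool := fun i => if h : i < n then v ⟨i, h⟩ else false

def res (n : ℕ) (g : ℕ → Bool) : Fin n → Bool := fun i => g i

lemma res_extn (n : ℕ) (v : Fin n → Bool) : res n (extn n v) = v :=
  funext fun i => by simp [res, extn, i.isLt]

lemma agr_extn_res (n : ℕ) (g : ℕ → Bool) : Agr n (extn n (res n g)) g :=
  fun i hi => by simp [extn, res, hi]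

lemma Agr.symm {n g g'} (h : Agr n g g') : Agr n g' g := fun i hi => (h i hi).symm

lemma Agr.trans {n : ℕ} {g g' g'' : ℕ → Bool} (h : Agr n g g') (h' : Agr n g' g'') :
    Agr n g g'' := fun i hi => (h i hi).trans (h' i hi)

lemma agr_res_eq {n g g'} (h : Agr n g g') : res n g = res n g' :=
  funext fun i => h i i.isLt

lemma agr_of_res_eq {n : ℕ} {g g' : ℕ → Bool} (h : res n g = res n g') : Agr n g g' :=
  fun i hi => congrFun h ⟨i, hi⟩

lemma agr_succ {n : ℕ} {g g' : ℕ → Bool} (h : Agr n g g') (hn : g n = g' n) :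
    Agr (n + 1) g g' := by
  intro i hi
  rcases Nat.lt_succ_iff_lt_or_eq.1 hi with hi' | rfl
  · exact h i hi'
  · exact hn

lemma agr_of_succ {n : ℕ} {g g' : ℕ → Bool} (h : Agr (n+1) g g') : Agr n g g' :=
  fun i hi => h i (hi.trans (Nat.lt_succ_self n))

lemma isClosed_depUnion {Z : Type*} [TopologicalSpace Z] (n : ℕ) (F : (ℕ → Bool) → Set Z)
    (hdep : ∀ g g', Agr n g g' → F g = F g') (hcl : ∀ g, IsClosed (F g))
    (p : (ℕ → Bool) → Prop) (hp : ∀ g g', Agr n g g' → p g → p g') :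
    IsClosed (⋃ h, ⋃ (_ : p h), F h) := by
  have key : (⋃ h, ⋃ (_ : p h), F h) = ⋃ v : Fin n → Bool, ⋃ (_ : p (extn n v)), F (extn n v) := by
    apply subset_antisymm
    · intro x hx
      simp only [mem_iUnion] at hx ⊢
      obtain ⟨h, ph, hxF⟩ := hx
      refine ⟨res n h, hp h _ (agr_extn_res n h).symm ph, ?_⟩
      rwa [hdep _ h (agr_extn_res n h)]
    · intro x hx
      simp only [mem_iUnion] at hx ⊢
      obtain ⟨v, pv, hxF⟩ := hx
      exact ⟨extn n v, pv, hxF⟩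
  rw [key]
  refine isClosed_iUnion_of_finite fun v => ?_
  by_cases hpv : p (extn n v)
  · simp [hpv, hcl]
  · simp [hpv]

end Idx

section Split
variable {X Y : Type*} [TopologicalSpace X] [TopologicalSpace Y]

/-- the splitting property extracted from nowhere-tightness -/
def SplitProp (f : X → Y) : Prop :=
  ∀ P : Set X, IsClosed P → ¬ IsScatteredSet (f '' P) →
    ∃ A B : Set X, IsClosed A ∧ IsClosed B ∧ A ⊆ P ∧ B ⊆ P ∧ Disjoint A B ∧
      f '' A = f '' B ∧ ¬ IsScatteredSet (f '' A)

lemma splitProp_of_nowhereTight {f : X → Y} (hnt : NowhereTight f) : SplitProp f := by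
  intro P hPc hPns
  have h2 := hnt.2
  push_neg at h2
  have key : ¬ (∀ Ps : Set (Set X), LooseFamilyOn f P Ps → Cardinal.mk Ps ≠ 2) :=
    fun hall => hPns (h2 P hPc hall)
  push_neg at key
  obtain ⟨Ps, hPs, hcard⟩ := key
  have : (2 : Cardinal) ≤ Cardinal.mk Ps := le_of_eq hcard.symm
  obtain ⟨⟨A, hA⟩, ⟨B, hB⟩, hAB⟩ := Cardinal.two_le_iff.1 this
  have hABne : A ≠ B := fun h => hAB (by simpa using h)
  obtain ⟨hpair, hcl, Q, hQns, himg⟩ := hPs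
  refine ⟨A, B, (hcl A hA).1, (hcl B hB).1, (hcl A hA).2, (hcl B hB).2,
    hpair hA hB hABne, ?_, ?_⟩
  · rw [himg A hA, himg B hB]
  · rw [himg A hA]; exact hQns

end Split

section Chain
variable {X Y : Type*} [TopologicalSpace X] [CompactSpace X]
  [TopologicalSpace Y] [T2Space Y]

lemma chain_lemma {f : X → Y} (hf : Continuous f) (hsp : SplitProp f) {I : Type*}
    (S : Finset I) (K : Set Y) (hKc : IsClosed K) (hKns : ¬ IsScatteredSet K)
    (P : I → Set X) (hPc : ∀ i ∈ S, IsClosed (P i)) (hPi : ∀ i ∈ S, K ⊆ f '' (P i)) :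
    ∃ (A : I → Bool → Set X) (K' : Set Y),
      IsClosed K' ∧ ¬ IsScatteredSet K' ∧ K' ⊆ K ∧
      ∀ i ∈ S, (∀ ε, IsClosed (A i ε) ∧ A i ε ⊆ P i ∧ f '' (A i ε) = K') ∧
        Disjoint (A i true) (A i false) := by
  classical
  induction S using Finset.induction_on with
  | empty => exact ⟨fun _ _ => ∅, K, hKc, hKns, subset_rfl, by simp⟩
  | @insert j S hj ih =>
    obtain ⟨A, K', hK'c, hK'ns, hK'K, hA⟩ :=
      ih (fun i hi => hPc i (Finset.mem_insert_of_mem hi))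
        (fun i hi => hPi i (Finset.mem_insert_of_mem hi))
    have hPjc : IsClosed (P j) := hPc j (Finset.mem_insert_self j S)
    have hPjK : K ⊆ f '' P j := hPi j (Finset.mem_insert_self j S)
    have himg : f '' (P j ∩ f ⁻¹' K') = K' := by
      rw [Set.image_inter_preimage]
      exact subset_antisymm inter_subset_right
        (subset_inter (hK'K.trans hPjK) subset_rfl)
    have hns : ¬ IsScatteredSet (f '' (P j ∩ f ⁻¹' K')) := by rw [himg]; exact hK'ns
    obtain ⟨A0, B0, hA0c, hB0c, hA0sub, hB0sub, hdisj, heq, hnsA0⟩ :=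
      hsp (P j ∩ f ⁻¹' K') (hPjc.inter (hK'c.preimage hf)) hns
    set Q : Set Y := f '' A0 with hQ
    have hQc : IsClosed Q := (hA0c.isCompact.image hf).isClosed
    have hQK' : Q ⊆ K' := by rw [hQ, ← himg]; exact image_mono hA0sub
    refine ⟨fun i ε => if i = j then (if ε then A0 else B0) else A i ε ∩ f ⁻¹' Q, Q,
      hQc, hnsA0, hQK'.trans hK'K, ?_⟩
    intro i hi
    rcases Finset.mem_insert.1 hi with rfl | hiS
    · simp only [if_pos rfl]
      exact ⟨fun ε => by cases ε <;>
        simp [hA0c, hB0c, hA0sub.trans inter_subset_left, hB0sub.trans inter_subset_left,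
          heq.symm, hQ.symm], by simpa using hdisj⟩
    · have hij : i ≠ j := fun h => hj (h ▸ hiS)
      simp only [if_neg hij]
      obtain ⟨hAi, hAdisj⟩ := hA i hiS
      refine ⟨fun ε => ⟨(hAi ε).1.inter (hQc.preimage hf),
        (inter_subset_left).trans (hAi ε).2.1, ?_⟩,
        hAdisj.mono inter_subset_left inter_subset_left⟩
      rw [Set.image_inter_preimage, (hAi ε).2.2]
      exact subset_antisymm inter_subset_right (subset_inter hQK' subset_rfl)

end Chain

section Tree
variable {X Y : Type*} [TopologicalSpace X] [TopologicalSpace Y]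

structure TreeState (f : X → Y) (n : ℕ) where
  P : (ℕ → Bool) → Set X
  K : (ℕ → Bool) → Set Y
  Pcl : ∀ g, IsClosed (P g)
  Kcl : ∀ g, IsClosed (K g)
  Kns : ∀ g, ¬ IsScatteredSet (K g)
  Pdep : ∀ g g', Agr n g g' → P g = P g'
  Kdep : ∀ g g', Agr n g g' → K g = K g'
  Pdisj : ∀ g g', ¬ Agr n g g' → Disjoint (P g) (P g')
  Kdisj : ∀ g g', ¬ Agr n g g' → Disjoint (K g) (K g')
  img : ∀ g, f '' P g = ⋃ h, K h

end Tree

section Step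
variable {X Y : Type*} [TopologicalSpace X] [CompactSpace X] [T2Space X]
  [TopologicalSpace Y] [CompactSpace Y] [T2Space Y]

lemma tree_step {f : X → Y} (hf : Continuous f) (hsp : SplitProp f) {n : ℕ}
    (d : TreeState f n) :
    ∃ d' : TreeState f (n+1), (∀ g, d'.P g ⊆ d.P g) ∧ (∀ g, d'.K g ⊆ d.K g) := by
  classical
  -- for each Y-node `w`, chain over all X-nodes
  have main : ∀ w : Fin n → Bool,
      ∃ (A : (Fin n → Bool) → Bool → Set X) (K' : Set Y),
        IsClosed K' ∧ ¬ IsScatteredSet K' ∧ K' ⊆ d.K (extn n w) ∧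
        ∀ u ∈ (Finset.univ : Finset (Fin n → Bool)),
          (∀ ε, IsClosed (A u ε) ∧
            A u ε ⊆ d.P (extn n u) ∩ f ⁻¹' (d.K (extn n w)) ∧ f '' (A u ε) = K') ∧
          Disjoint (A u true) (A u false) := by
    intro w
    refine chain_lemma hf hsp Finset.univ (d.K (extn n w)) (d.Kcl _) (d.Kns _)
      (fun u => d.P (extn n u) ∩ f ⁻¹' (d.K (extn n w)))
      (fun u _ => (d.Pcl _).inter ((d.Kcl _).preimage hf)) (fun u _ => ?_)
    rw [Set.image_inter_preimage, d.img]
    exact subset_inter (subset_iUnion (fun h => d.K h) (extn n w)) subset_rfl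
  choose A K1 hK1c hK1ns hK1sub hAprop using main
  have hAcl : ∀ w u ε, IsClosed (A w u ε) := fun w u ε =>
    ((hAprop w u (Finset.mem_univ u)).1 ε).1
  have hAsub : ∀ w u ε, A w u ε ⊆ d.P (extn n u) ∩ f ⁻¹' (d.K (extn n w)) := fun w u ε =>
    ((hAprop w u (Finset.mem_univ u)).1 ε).2.1
  have hAimg : ∀ w u ε, f '' (A w u ε) = K1 w := fun w u ε =>
    ((hAprop w u (Finset.mem_univ u)).1 ε).2.2
  have hApair : ∀ w u {ε ε' : Bool}, ε ≠ ε' → Disjoint (A w u ε) (A w u ε') := by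
    intro w u ε ε' hne
    cases ε <;> cases ε'
    · exact absurd rfl hne
    · exact ((hAprop w u (Finset.mem_univ u)).2).symm
    · exact (hAprop w u (Finset.mem_univ u)).2
    · exact absurd rfl hne
  -- split each K1 w into two pieces
  have hsplit : ∀ w : Fin n → Bool, ∃ K₀ K₁ : Set Y,
      IsClosed K₀ ∧ IsClosed K₁ ∧ K₀ ⊆ K1 w ∧ K₁ ⊆ K1 w ∧ Disjoint K₀ K₁ ∧
      ¬ IsScatteredSet K₀ ∧ ¬ IsScatteredSet K₁ := fun w => ysplit (hK1c w) (hK1ns w)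
  choose KA KB hKAc hKBc hKAsub hKBsub hKABdisj hKAns hKBns using hsplit
  set KH : (Fin n → Bool) → Bool → Set Y := fun w δ => if δ then KA w else KB w with hKH
  have hKHc : ∀ w δ, IsClosed (KH w δ) := by
    intro w δ; cases δ
    · exact hKBc w
    · exact hKAc w
  have hKHns : ∀ w δ, ¬ IsScatteredSet (KH w δ) := by
    intro w δ; cases δ
    · exact hKBns w
    · exact hKAns w
  have hKHsub : ∀ w δ, KH w δ ⊆ K1 w := by
    intro w δ; cases δ
    · exact hKBsub w
    · exact hKAsub w
  have hKHdisj : ∀ w {δ δ' : Bool}, δ ≠ δ' → Disjoint (KH w δ) (KH w δ') := by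
    intro w δ δ' hne
    cases δ <;> cases δ'
    · exact absurd rfl hne
    · exact (hKABdisj w).symm
    · exact hKABdisj w
    · exact absurd rfl hne
  set NewK : (ℕ → Bool) → Set Y := fun h => KH (res n h) (h n) with hNewK
  set NewU : Set Y := ⋃ h, NewK h with hNewU
  have hNewUalt : NewU = ⋃ w : Fin n → Bool, ⋃ δ : Bool, KH w δ := by
    apply subset_antisymm
    · exact iUnion_subset fun h =>
        subset_iUnion_of_subset (res n h) (subset_iUnion_of_subset (h n) subset_rfl)
    · refine iUnion_subset fun w => iUnion_subset fun δ => ?_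
      have hkey : KH w δ = NewK (Function.update (extn n w) n δ) := by
        have h1 : res n (Function.update (extn n w) n δ) = w := by
          funext i
          rw [res, Function.update_of_ne (Nat.ne_of_lt i.isLt)]
          simp [extn, i.isLt]
        have h2 : Function.update (extn n w) n δ n = δ := by simp
        show _ = KH (res n (Function.update (extn n w) n δ)) (Function.update (extn n w) n δ n)
        rw [h1, h2]
      rw [hkey]
      exact subset_iUnion NewK _
  have hNewUc : IsClosed NewU := by
    rw [hNewUalt]
    exact isClosed_iUnion_of_finite fun w => isClosed_iUnion_of_finite fun δ => hKHc w δ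
  set NewP : (ℕ → Bool) → Set X :=
    fun g => ⋃ w : Fin n → Bool, (A w (res n g) (g n) ∩ f ⁻¹' NewU) with hNewP
  have hNewPeq : ∀ g, NewP g = ⋃ w : Fin n → Bool, (A w (res n g) (g n) ∩ f ⁻¹' NewU) :=
    fun g => rfl
  have hNewKeq : ∀ g, NewK g = KH (res n g) (g n) := fun g => rfl
  have hAdP : ∀ g w, A w (res n g) (g n) ⊆ d.P g := by
    intro g w
    have h1 := (hAsub w (res n g) (g n)).trans inter_subset_left
    rwa [d.Pdep _ _ (agr_extn_res n g)] at h1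
  have hNewPsub : ∀ g, NewP g ⊆ d.P g := fun g =>
    iUnion_subset fun w => inter_subset_left.trans (hAdP g w)
  have hNewKsub : ∀ g, NewK g ⊆ d.K g := by
    intro g
    refine (hKHsub _ _).trans ((hK1sub _).trans ?_)
    rw [d.Kdep _ _ (agr_extn_res n g)]
  have himgNew : ∀ g, f '' NewP g = NewU := by
    intro g
    rw [hNewPeq g]
    simp only [image_iUnion]
    have hw : ∀ w : Fin n → Bool,
        f '' (A w (res n g) (g n) ∩ f ⁻¹' NewU) = K1 w ∩ NewU := by
      intro w; rw [Set.image_inter_preimage, hAimg]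
    apply subset_antisymm
    · exact iUnion_subset fun w => by rw [hw w]; exact inter_subset_right
    · intro y hy
      have h2 : y ∈ ⋃ w : Fin n → Bool, ⋃ δ : Bool, KH w δ := by rw [← hNewUalt]; exact hy
      simp only [mem_iUnion] at h2
      obtain ⟨w, δ, hyK⟩ := h2
      refine mem_iUnion.2 ⟨w, ?_⟩
      rw [hw w]
      exact ⟨hKHsub w δ hyK, hy⟩
  refine ⟨⟨NewP, NewK, ?_, ?_, ?_, ?_, ?_, ?_, ?_, ?_⟩, hNewPsub, hNewKsub⟩
  · intro g
    exact isClosed_iUnion_of_finite fun w => (hAcl w _ _).inter (hNewUc.preimage hf)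
  · intro g; exact hKHc _ _
  · intro g; exact hKHns _ _
  · intro g g' hagr
    have h1 : res n g = res n g' := agr_res_eq (agr_of_succ hagr)
    have h2 : g n = g' n := hagr n (Nat.lt_succ_self n)
    rw [hNewPeq g, hNewPeq g', h1, h2]
  · intro g g' hagr
    have h1 : res n g = res n g' := agr_res_eq (agr_of_succ hagr)
    have h2 : g n = g' n := hagr n (Nat.lt_succ_self n)
    rw [hNewKeq g, hNewKeq g', h1, h2]
  · intro g g' hnagr
    by_cases hA : Agr n g g'
    · have hgn : g n ≠ g' n := fun h => hnagr (agr_succ hA h)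
      have hres : res n g = res n g' := agr_res_eq hA
      refine Set.disjoint_iUnion_left.2 fun w => Set.disjoint_iUnion_right.2 fun w' => ?_
      by_cases hww : w = w'
      · subst hww
        refine Disjoint.mono inter_subset_left inter_subset_left ?_
        rw [hres]
        exact hApair w _ hgn
      · have hnagr' : ¬ Agr n (extn n w) (extn n w') := by
          intro hagr'
          apply hww
          funext i
          have := hagr' i.val i.isLt
          simpa [extn, i.isLt] using this
        have hdK := (d.Kdisj _ _ hnagr').preimage f
        exact Disjoint.mono
          (inter_subset_left.trans ((hAsub w _ _).trans inter_subset_right))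
          (inter_subset_left.trans ((hAsub w' _ _).trans inter_subset_right)) hdK
    · exact (d.Pdisj g g' hA).mono (hNewPsub g) (hNewPsub g')
  · intro g g' hnagr
    by_cases hA : Agr n g g'
    · have hgn : g n ≠ g' n := fun h => hnagr (agr_succ hA h)
      have hres : res n g = res n g' := agr_res_eq hA
      rw [hNewKeq g, hNewKeq g', hres]
      exact hKHdisj _ hgn
    · exact (d.Kdisj g g' hA).mono (hNewKsub g) (hNewKsub g')
  · exact himgNew

end Step

section Cantor

lemma mem_closure_compl_singleton (b : ℕ → Bool) :
    b ∈ closure {c : ℕ → Bool | c ≠ b} := by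
  rw [mem_closure_iff]
  intro U hU hbU
  obtain ⟨I, u, hu, hsub⟩ := isOpen_pi_iff.1 hU b hbU
  set mIdx := I.sup id + 1 with hm
  have hmI : mIdx ∉ I := fun h => by
    have := Finset.le_sup (f := id) h
    simp only [id] at this
    omega
  refine ⟨Function.update b mIdx (!b mIdx), hsub ?_, ?_⟩
  · intro a haI
    rw [Function.update_of_ne (fun h => hmI (by rw [← h]; exact haI))]
    exact (hu a haI).2
  · show _ ≠ b
    intro h
    have h2 := congrFun h mIdx
    rw [Function.update_self] at h2
    exact Bool.not_ne_self _ h2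

lemma not_scattered_of_onto {Y : Type*} [TopologicalSpace Y] [CompactSpace Y] [T2Space Y]
    {Q : Set Y} (hQcl : IsClosed Q) (ψ : Y → ℕ → Bool) (hψ : ContinuousOn ψ Q)
    (hsurj : ∀ b : ℕ → Bool, ∃ y ∈ Q, ψ y = b) : ¬ IsScatteredSet Q := by
  intro hsc
  classical
  set S : Set (Set Y) := {Z | Z ⊆ Q ∧ IsClosed Z ∧ ∀ b, ∃ y ∈ Z, ψ y = b} with hS
  have hQS : Q ∈ S := ⟨subset_rfl, hQcl, hsurj⟩
  have hzorn : ∀ c ⊆ S, IsChain (· ⊆ ·) c → c.Nonempty → ∃ lb ∈ S, ∀ s ∈ c, lb ⊆ s := by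
    intro c hcS hchain hcne
    refine ⟨⋂₀ c, ⟨?_, ?_, ?_⟩, fun s hs => sInter_subset_of_mem hs⟩
    · obtain ⟨Z, hZ⟩ := hcne
      exact (sInter_subset_of_mem hZ).trans (hcS hZ).1
    · exact isClosed_sInter fun Z hZ => (hcS hZ).2.1
    · intro b
      have hFbcl : IsClosed (Q ∩ ψ ⁻¹' {b}) :=
        hψ.preimage_isClosed_of_isClosed hQcl isClosed_singleton
      have hne : ∀ Z : c, ((Z : Set Y) ∩ (Q ∩ ψ ⁻¹' {b})).Nonempty := by
        rintro ⟨Z, hZ⟩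
        obtain ⟨y, hyZ, hyb⟩ := (hcS hZ).2.2 b
        exact ⟨y, hyZ, (hcS hZ).1 hyZ, by simp [hyb]⟩
      have hdir : Directed (· ⊇ ·) (fun Z : c => (Z : Set Y) ∩ (Q ∩ ψ ⁻¹' {b})) := by
        rintro ⟨Z, hZ⟩ ⟨Z', hZ'⟩
        rcases eq_or_ne Z Z' with rfl | hZne
        · exact ⟨⟨Z, hZ⟩, subset_rfl, subset_rfl⟩
        rcases hchain hZ hZ' hZne with h | h
        · exact ⟨⟨Z, hZ⟩, subset_rfl, inter_subset_inter_left _ h⟩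
        · exact ⟨⟨Z', hZ'⟩, inter_subset_inter_left _ h, subset_rfl⟩
      haveI : Nonempty c := hcne.to_subtype
      obtain ⟨y, hy⟩ := IsCompact.nonempty_iInter_of_directed_nonempty_isCompact_isClosed
        (fun Z : c => (Z : Set Y) ∩ (Q ∩ ψ ⁻¹' {b})) hdir hne
        (fun Z => (((hcS Z.2).2.1).inter hFbcl).isCompact)
        (fun Z => ((hcS Z.2).2.1).inter hFbcl)
      simp only [mem_iInter] at hy
      obtain ⟨Z0, hZ0⟩ := hcne
      refine ⟨y, mem_sInter.2 fun Z hZ => (hy ⟨Z, hZ⟩).1, ?_⟩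
      have := (hy ⟨Z0, hZ0⟩).2.2
      simpa using this
  obtain ⟨m, hmQ, hmin⟩ := zorn_superset_nonempty S hzorn Q hQS
  obtain ⟨hmQ', hmcl, hmsurj⟩ := hmin.prop
  have hmne : m.Nonempty := by
    obtain ⟨y, hy, -⟩ := hmsurj (fun _ => true)
    exact ⟨y, hy⟩
  obtain ⟨z, hzm, U, hU, hUm⟩ := hsc m hmQ' hmne
  have hzU : z ∈ U := by
    have : z ∈ U ∩ m := by rw [hUm]; rfl
    exact this.1
  set Z1 : Set Y := m ∩ Uᶜ with hZ1
  have hZ1cl : IsClosed Z1 := hmcl.inter (isClosed_compl_iff.2 hU)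
  have hzZ1 : z ∉ Z1 := fun h => h.2 hzU
  have hZ1m : Z1 ⊆ m := inter_subset_left
  have hZ1ne_m : Z1 ≠ m := fun h => hzZ1 (h ▸ hzm)
  have hZ1S : Z1 ∉ S := fun hmem => hZ1ne_m (le_antisymm hZ1m (hmin.2 hmem hZ1m))
  have hbstar : ∃ b, ∀ y ∈ Z1, ψ y ≠ b := by
    by_contra hc
    push_neg at hc
    exact hZ1S ⟨hZ1m.trans hmQ', hZ1cl, hc⟩
  obtain ⟨bs, hbs⟩ := hbstar
  have hmz : m \ {z} = Z1 := by
    ext y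
    constructor
    · rintro ⟨hym, hyz⟩
      refine ⟨hym, fun hyU => hyz ?_⟩
      have h3 : y ∈ U ∩ m := ⟨hyU, hym⟩
      rw [hUm] at h3
      exact h3
    · rintro ⟨hym, hyU⟩
      refine ⟨hym, fun hyz => hyU ?_⟩
      have h3 : y ∈ U ∩ m := by rw [hUm]; exact hyz
      exact h3.1
  have hWcpt : IsCompact (ψ '' Z1) :=
    (hZ1cl.isCompact).image_of_continuousOn (hψ.mono (hZ1m.trans hmQ'))
  have hWcl : IsClosed (ψ '' Z1) := hWcpt.isClosed
  have hsubW : {b : ℕ → Bool | b ≠ bs} ⊆ ψ '' Z1 := by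
    intro b hb
    obtain ⟨y, hym, hyb⟩ := hmsurj b
    have hyZ1 : y ∈ Z1 := by
      rw [← hmz]
      refine ⟨hym, fun hyz => ?_⟩
      rcases hyz with rfl
      -- y = z ; need ψ z = bs for contradiction
      obtain ⟨y', hy'm, hy'bs⟩ := hmsurj bs
      have hy'z : y' ∉ Z1 := fun h => hbs y' h hy'bs
      have : y' ∈ ({y} : Set Y) := by
        rw [← hmz] at hy'z
        by_contra hne
        exact hy'z ⟨hy'm, hne⟩
      rcases this with rfl
      exact hb (hyb.symm.trans hy'bs)
    exact ⟨y, hyZ1, hyb⟩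
  have hbsW : bs ∈ ψ '' Z1 := by
    have := closure_mono hsubW
    rw [hWcl.closure_eq] at this
    exact this (mem_closure_compl_singleton bs)
  obtain ⟨y, hyZ1, hybs⟩ := hbsW
  exact hbs y hyZ1 hybs

end Cantor

section Main
variable {X Y : Type*} [TopologicalSpace X] [CompactSpace X] [T2Space X]
  [TopologicalSpace Y] [CompactSpace Y] [T2Space Y]

noncomputable def treeSeq {f : X → Y} (hf : Continuous f) (hsp : SplitProp f)
    (d0 : TreeState f 0) : (n : ℕ) → TreeState f n
  | 0 => d0
  | n + 1 => (tree_step hf hsp (treeSeq hf hsp d0 n)).choose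

lemma treeSeq_sub {f : X → Y} (hf : Continuous f) (hsp : SplitProp f)
    (d0 : TreeState f 0) (n : ℕ) :
    (∀ g, (treeSeq hf hsp d0 (n+1)).P g ⊆ (treeSeq hf hsp d0 n).P g) ∧
      (∀ g, (treeSeq hf hsp d0 (n+1)).K g ⊆ (treeSeq hf hsp d0 n).K g) :=
  (tree_step hf hsp (treeSeq hf hsp d0 n)).choose_spec

theorem stmt7' {X Y : Type*}
    [TopologicalSpace X] [CompactSpace X] [T2Space X]
    [TopologicalSpace Y] [CompactSpace Y] [T2Space Y]
    (f : X → Y) (hf : Continuous f) (hnt : NowhereTight f) :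
    ∃ (D : Set X) (φ : X → (ℕ → Bool)), IsClosed D ∧ ContinuousOn φ D ∧
      ∃ Q : Set Y, ¬ IsScatteredSet Q ∧ ∀ y ∈ Q, φ '' (f ⁻¹' {y} ∩ D) = Set.univ := by
  classical
  have hsp : SplitProp f := splitProp_of_nowhereTight hnt
  have d0 : TreeState f 0 :=
    { P := fun _ => univ
      K := fun _ => Set.range f
      Pcl := fun _ => isClosed_univ
      Kcl := fun _ => (isCompact_range hf).isClosed
      Kns := fun _ => hnt.1
      Pdep := fun _ _ _ => rfl
      Kdep := fun _ _ _ => rfl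
      Pdisj := fun g g' h => absurd (fun i hi => absurd hi (Nat.not_lt_zero i)) h
      Kdisj := fun g g' h => absurd (fun i hi => absurd hi (Nat.not_lt_zero i)) h
      img := fun g => by rw [image_univ]; exact (Set.iUnion_const _).symm }
  set d : (n : ℕ) → TreeState f n := treeSeq hf hsp d0 with hd
  have hPmono : ∀ n g, (d (n+1)).P g ⊆ (d n).P g := fun n => (treeSeq_sub hf hsp d0 n).1
  have hKmono : ∀ n g, (d (n+1)).K g ⊆ (d n).K g := fun n => (treeSeq_sub hf hsp d0 n).2
  set UX : ℕ → Set X := fun n => ⋃ h, (d n).P h with hUX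
  set UY : ℕ → Set Y := fun n => ⋃ h, (d n).K h with hUY
  set D : Set X := ⋂ n, UX n with hD
  set Q : Set Y := ⋂ n, UY n with hQ
  set C : ℕ → Bool → Set X := fun i ε => ⋃ h, ⋃ (_ : h i = ε), (d (i+1)).P h with hC
  set CY : ℕ → Bool → Set Y := fun i ε => ⋃ h, ⋃ (_ : h i = ε), (d (i+1)).K h with hCY
  set φ : X → ℕ → Bool := fun x i => (C i true).boolIndicator x with hφdef
  set ψ : Y → ℕ → Bool := fun y i => (CY i true).boolIndicator y with hψdef
  -- closedness
  have hUXcl : ∀ n, IsClosed (UX n) := by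
    intro n
    have : UX n = ⋃ h, ⋃ (_ : True), (d n).P h := by simp [hUX]
    rw [this]
    exact isClosed_depUnion n _ (d n).Pdep (d n).Pcl _ (fun _ _ _ h => h)
  have hUYcl : ∀ n, IsClosed (UY n) := by
    intro n
    have : UY n = ⋃ h, ⋃ (_ : True), (d n).K h := by simp [hUY]
    rw [this]
    exact isClosed_depUnion n _ (d n).Kdep (d n).Kcl _ (fun _ _ _ h => h)
  have hCcl : ∀ i ε, IsClosed (C i ε) := by
    intro i ε
    refine isClosed_depUnion (i+1) _ (d (i+1)).Pdep (d (i+1)).Pcl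
      (fun h => h i = ε) (fun g g' hagr hg => ?_)
    show g' i = ε
    rw [← hagr i (Nat.lt_succ_self i)]
    exact hg
  have hCYcl : ∀ i ε, IsClosed (CY i ε) := by
    intro i ε
    refine isClosed_depUnion (i+1) _ (d (i+1)).Kdep (d (i+1)).Kcl
      (fun h => h i = ε) (fun g g' hagr hg => ?_)
    show g' i = ε
    rw [← hagr i (Nat.lt_succ_self i)]
    exact hg
  have hDcl : IsClosed D := isClosed_iInter hUXcl
  have hQcl : IsClosed Q := isClosed_iInter hUYcl
  -- cover and disjointness
  have hCcover : ∀ i, UX (i+1) ⊆ C i true ∪ C i false := by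
    intro i x hx
    obtain ⟨h, hxh⟩ := mem_iUnion.1 hx
    cases hhi : h i
    · exact Or.inr (mem_iUnion.2 ⟨h, mem_iUnion.2 ⟨hhi, hxh⟩⟩)
    · exact Or.inl (mem_iUnion.2 ⟨h, mem_iUnion.2 ⟨hhi, hxh⟩⟩)
  have hCYcover : ∀ i, UY (i+1) ⊆ CY i true ∪ CY i false := by
    intro i y hy
    obtain ⟨h, hyh⟩ := mem_iUnion.1 hy
    cases hhi : h i
    · exact Or.inr (mem_iUnion.2 ⟨h, mem_iUnion.2 ⟨hhi, hyh⟩⟩)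
    · exact Or.inl (mem_iUnion.2 ⟨h, mem_iUnion.2 ⟨hhi, hyh⟩⟩)
  have hCdisj : ∀ i, Disjoint (C i true) (C i false) := by
    intro i
    rw [Set.disjoint_left]
    intro x hxt hxf
    obtain ⟨h, hh⟩ := mem_iUnion.1 hxt
    obtain ⟨hhi, hxh⟩ := mem_iUnion.1 hh
    obtain ⟨h', hh'⟩ := mem_iUnion.1 hxf
    obtain ⟨hh'i, hxh'⟩ := mem_iUnion.1 hh'
    have hnagr : ¬ Agr (i+1) h h' := fun hagr => by
      have := hagr i (Nat.lt_succ_self i)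
      rw [hhi, hh'i] at this
      exact absurd this (by decide)
    exact Set.disjoint_left.1 ((d (i+1)).Pdisj h h' hnagr) hxh hxh'
  have hCYdisj : ∀ i, Disjoint (CY i true) (CY i false) := by
    intro i
    rw [Set.disjoint_left]
    intro y hyt hyf
    obtain ⟨h, hh⟩ := mem_iUnion.1 hyt
    obtain ⟨hhi, hyh⟩ := mem_iUnion.1 hh
    obtain ⟨h', hh'⟩ := mem_iUnion.1 hyf
    obtain ⟨hh'i, hyh'⟩ := mem_iUnion.1 hh'
    have hnagr : ¬ Agr (i+1) h h' := fun hagr => by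
      have := hagr i (Nat.lt_succ_self i)
      rw [hhi, hh'i] at this
      exact absurd this (by decide)
    exact Set.disjoint_left.1 ((d (i+1)).Kdisj h h' hnagr) hyh hyh'
  -- key pointwise computations
  have hφcomp : ∀ (b : ℕ → Bool) (x : X) (i : ℕ), x ∈ (d (i+1)).P b → φ x i = b i := by
    intro b x i hx
    cases hbi : b i
    · have hxC : x ∈ C i false := mem_iUnion.2 ⟨b, mem_iUnion.2 ⟨hbi, hx⟩⟩
      have hxnC : x ∉ C i true := fun hmem => Set.disjoint_left.1 (hCdisj i) hmem hxC
      exact (Set.notMem_iff_boolIndicator _ _).1 hxnC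
    · have hxC : x ∈ C i true := mem_iUnion.2 ⟨b, mem_iUnion.2 ⟨hbi, hx⟩⟩
      exact (Set.mem_iff_boolIndicator _ _).1 hxC
  have hψcomp : ∀ (b : ℕ → Bool) (y : Y) (i : ℕ), y ∈ (d (i+1)).K b → ψ y i = b i := by
    intro b y i hy
    cases hbi : b i
    · have hyC : y ∈ CY i false := mem_iUnion.2 ⟨b, mem_iUnion.2 ⟨hbi, hy⟩⟩
      have hynC : y ∉ CY i true := fun hmem => Set.disjoint_left.1 (hCYdisj i) hmem hyC
      exact (Set.notMem_iff_boolIndicator _ _).1 hynC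
    · have hyC : y ∈ CY i true := mem_iUnion.2 ⟨b, mem_iUnion.2 ⟨hbi, hy⟩⟩
      exact (Set.mem_iff_boolIndicator _ _).1 hyC
  -- continuity of φ on D
  have hφcont : ContinuousOn φ D := by
    rw [hφdef, continuousOn_pi]
    intro i
    rw [continuousOn_boolIndicator_iff_isClopen]
    refine ⟨(hCcl i true).preimage continuous_subtype_val, ?_⟩
    have hcomp : (Subtype.val ⁻¹' (C i true) : Set D)ᶜ = Subtype.val ⁻¹' (C i false) := by
        ext ⟨x, hxD⟩
        simp only [mem_compl_iff, mem_preimage]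
        constructor
        · intro hnx
          have hxU : x ∈ UX (i+1) := mem_iInter.1 hxD (i+1)
          rcases hCcover i hxU with h | h
          · exact absurd h hnx
          · exact h
        · intro hx hnx
          exact Set.disjoint_left.1 (hCdisj i) hnx hx
    rw [← isClosed_compl_iff, hcomp]
    exact (hCcl i false).preimage continuous_subtype_val
  have hψcont : ContinuousOn ψ Q := by
    rw [hψdef, continuousOn_pi]
    intro i
    rw [continuousOn_boolIndicator_iff_isClopen]
    refine ⟨(hCYcl i true).preimage continuous_subtype_val, ?_⟩
    have hcomp : (Subtype.val ⁻¹' (CY i true) : Set Q)ᶜ = Subtype.val ⁻¹' (CY i false) := by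
        ext ⟨y, hyQ⟩
        simp only [mem_compl_iff, mem_preimage]
        constructor
        · intro hny
          have hyU : y ∈ UY (i+1) := mem_iInter.1 hyQ (i+1)
          rcases hCYcover i hyU with h | h
          · exact absurd h hny
          · exact h
        · intro hy hny
          exact Set.disjoint_left.1 (hCYdisj i) hny hy
    rw [← isClosed_compl_iff, hcomp]
    exact (hCYcl i false).preimage continuous_subtype_val
  -- surjectivity of ψ on Q, hence Q non-scattered
  have hψsurj : ∀ b : ℕ → Bool, ∃ y ∈ Q, ψ y = b := by
    intro b
    have hne : (⋂ m, (d m).K b).Nonempty := by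
      refine IsCompact.nonempty_iInter_of_sequence_nonempty_isCompact_isClosed
        (fun m => (d m).K b) (fun m => hKmono m b)
        (fun m => nonempty_of_not_scattered ((d m).Kns b))
        ((d 0).Kcl b).isCompact (fun m => (d m).Kcl b)
    obtain ⟨y, hy⟩ := hne
    have hym : ∀ m, y ∈ (d m).K b := fun m => mem_iInter.1 hy m
    refine ⟨y, mem_iInter.2 fun m => mem_iUnion.2 ⟨b, hym m⟩, funext fun i => ?_⟩
    exact hψcomp b y i (hym (i+1))
  have hQns : ¬ IsScatteredSet Q := not_scattered_of_onto hQcl ψ hψcont hψsurj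
  -- fiber surjectivity of φ
  refine ⟨D, φ, hDcl, hφcont, Q, hQns, ?_⟩
  intro y hyQ
  rw [eq_univ_iff_forall]
  intro b
  have hne : (⋂ m, (f ⁻¹' {y} ∩ (d m).P b)).Nonempty := by
    refine IsCompact.nonempty_iInter_of_sequence_nonempty_isCompact_isClosed
      (fun m => f ⁻¹' {y} ∩ (d m).P b)
      (fun m => inter_subset_inter_right _ (hPmono m b)) (fun m => ?_)
      ((isClosed_singleton.preimage hf).inter ((d 0).Pcl b)).isCompact
      (fun m => (isClosed_singleton.preimage hf).inter ((d m).Pcl b))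
    have hyU : y ∈ UY m := mem_iInter.1 hyQ m
    have : y ∈ f '' ((d m).P b) := by rw [(d m).img b]; exact hyU
    obtain ⟨x, hxP, hfx⟩ := this
    exact ⟨x, by simp [hfx], hxP⟩
  obtain ⟨x, hx⟩ := hne
  have hxm : ∀ m, x ∈ f ⁻¹' {y} ∩ (d m).P b := fun m => mem_iInter.1 hx m
  have hxD : x ∈ D := mem_iInter.2 fun m => mem_iUnion.2 ⟨b, (hxm m).2⟩
  refine ⟨x, ⟨(hxm 0).1, hxD⟩, funext fun i => ?_⟩
  exact hφcomp b x i (hxm (i+1)).2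

end Main

end AuxStmt7

/-- If `f : X → Y` is nowhere tight, then `f` is not weakly c-tight: there is a
`2^ω`-loose function for `f`. -/
theorem stmt7 {X Y : Type*}
    [TopologicalSpace X] [CompactSpace X] [T2Space X]
    [TopologicalSpace Y] [CompactSpace Y] [T2Space Y]
    (f : X → Y) (hf : Continuous f) (hnt : NowhereTight f) :
    ∃ (D : Set X) (φ : X → (ℕ → Bool)), LooseFunction f D φ := by
  obtain ⟨D, φ, h1, h2, h3⟩ := stmt7' f hf hnt
  exact ⟨D, φ, h1, h2, h3⟩
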